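/- Define λ₂⁰(r,a,b) = -(r^{2σ₁}/2)(1 + a r^{2(σ₂-σ₁)})(1 + Γ₂(r,a,b)). Then for all j, m ∈ ℕ, |∂^{j+m}/(∂aʲ ∂bᵐ) λ₂⁰(r,a,b)| ≤ C r^{2σ₁+2j(σ₂-σ₁)+2m(σ-2σ₁)} uniformly on (0,ε*] × [0,1]², and at (a,b)=(0,0) the derivative equals C_{2,j,m} r^{2σ₁+2j(σ₂-σ₁)+2m(σ-2σ₁)} for some constant C_{2,j,m}. -/

import Mathlib

open Real Set

noncomputable def Gamma1 (σ₁ σ₂ r a : ℝ) : ℝ := (1 + a * r ^ (2*(σ₂-σ₁)))⁻¹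

noncomputable def Gamma2 (σ σ₁ σ₂ r a b : ℝ) : ℝ :=
  Real.sqrt (1 - 4*b*r ^ (2*(σ-2*σ₁)) * (Gamma1 σ₁ σ₂ r a)^2)

/-- Mixed partial derivative `∂^{j+m}/(∂aʲ ∂bᵐ)`. -/
noncomputable def pderiv2 (j m : ℕ) (f : ℝ → ℝ → ℝ) (a b : ℝ) : ℝ :=
  iteratedDeriv m (fun b' => iteratedDeriv j (fun a' => f a' b') a) b

noncomputable def lam1 (σ σ₁ σ₂ r a b : ℝ) : ℝ :=
  -2 * r ^ (2*(σ-σ₁)) * Gamma1 σ₁ σ₂ r a * (1 + Gamma2 σ σ₁ σ₂ r a b)⁻¹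

noncomputable def lam2 (σ σ₁ σ₂ r a b : ℝ) : ℝ :=
  -(r ^ (2*σ₁) / 2) * (1 + a * r ^ (2*(σ₂-σ₁))) * (1 + Gamma2 σ σ₁ σ₂ r a b)

noncomputable def Gfun (σ σ₁ σ₂ r a b : ℝ) : ℝ :=
  r ^ (2*σ₁) * (1 + a * r ^ (2*(σ₂-σ₁))) * Gamma2 σ σ₁ σ₂ r a b

namespace Stmt3Aux

abbrev Tm : Type := ℝ × ℕ × ℝ

noncomputable def tval (t : Tm) (x y : ℝ) : ℝ :=
  t.1 * (1+x)^t.2.1 * ((1+x)^2 - 4*y) ^ t.2.2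

noncomputable def eval (L : List Tm) (x y : ℝ) : ℝ := (L.map (fun t => tval t x y)).sum

def DxT (t : Tm) : List Tm :=
  [(t.1 * t.2.1, t.2.1 - 1, t.2.2), (2 * t.2.2 * t.1, t.2.1 + 1, t.2.2 - 1)]

def DyT (t : Tm) : Tm := (-4 * t.2.2 * t.1, t.2.1, t.2.2 - 1)

def DxL (L : List Tm) : List Tm := L.flatMap DxT

def DyL (L : List Tm) : List Tm := L.map DyT

def scaleL (c : ℝ) (L : List Tm) : List Tm := L.map (fun t => (c * t.1, t.2))

noncomputable def Lu : List Tm := [(-(1/2), 1, 0), (-(1/2), 0, 1/2)]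

@[simp] lemma eval_nil (x y : ℝ) : eval [] x y = 0 := by simp [eval]

@[simp] lemma eval_cons (t : Tm) (L : List Tm) (x y : ℝ) :
    eval (t :: L) x y = tval t x y + eval L x y := by simp [eval]

lemma eval_append (L₁ L₂ : List Tm) (x y : ℝ) :
    eval (L₁ ++ L₂) x y = eval L₁ x y + eval L₂ x y := by simp [eval]

lemma eval_scale (c : ℝ) (L : List Tm) (x y : ℝ) :
    eval (scaleL c L) x y = c * eval L x y := by
  induction L with
  | nil => simp [scaleL]
  | cons t L ih =>
      simp only [scaleL, List.map_cons, eval_cons] at *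
      rw [ih]; unfold tval; simp; ring

lemma DxL_cons (t : Tm) (L : List Tm) : DxL (t :: L) = DxT t ++ DxL L := by
  simp [DxL]

lemma DxL_scale (c : ℝ) (L : List Tm) : DxL (scaleL c L) = scaleL c (DxL L) := by
  unfold DxL scaleL
  rw [List.flatMap_map, List.map_flatMap]
  congr 1
  funext t
  obtain ⟨cc, k, q⟩ := t
  simp [DxT, Function.comp]
  constructor <;> ring

lemma DyL_scale (c : ℝ) (L : List Tm) : DyL (scaleL c L) = scaleL c (DyL L) := by
  unfold DyL scaleL
  rw [List.map_map, List.map_map]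
  congr 1
  funext t
  obtain ⟨cc, k, q⟩ := t
  simp [DyT]; ring

lemma DxL_iter_scale (c : ℝ) (L : List Tm) (j : ℕ) :
    DxL^[j] (scaleL c L) = scaleL c (DxL^[j] L) := by
  induction j generalizing L with
  | zero => simp
  | succ n ih => simp [Function.iterate_succ_apply, DxL_scale, ih]

lemma DyL_iter_scale (c : ℝ) (L : List Tm) (m : ℕ) :
    DyL^[m] (scaleL c L) = scaleL c (DyL^[m] L) := by
  induction m generalizing L with
  | zero => simp
  | succ n ih => simp [Function.iterate_succ_apply, DyL_scale, ih]

lemma hasDerivAt_tx (t : Tm) (y x : ℝ) (hu : 0 < (1+x)^2 - 4*y) :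
    HasDerivAt (fun x' => tval t x' y) (eval (DxT t) x y) x := by
  obtain ⟨c, k, q⟩ := t
  have h0 : HasDerivAt (fun x' : ℝ => 1 + x') 1 x := by
    simpa using (hasDerivAt_id x).const_add (1:ℝ)
  have h1 : HasDerivAt (fun x' : ℝ => (1+x')^k) ((k:ℝ)*(1+x)^(k-1)) x := by
    simpa using h0.fun_pow k
  have hu2 : HasDerivAt (fun x' : ℝ => (1+x')^2 - 4*y) (2*(1+x)) x := by
    have := (h0.pow 2).sub_const (4*y)
    simpa using this
  have h2 : HasDerivAt (fun x' : ℝ => ((1+x')^2 - 4*y)^q)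
      ((2*(1+x)) * q * ((1+x)^2 - 4*y)^(q-1)) x :=
    hu2.rpow_const (Or.inl (ne_of_gt hu))
  have h := (h1.const_mul c).fun_mul h2
  refine h.congr_deriv ?_
  unfold eval DxT tval
  simp only [List.map_cons, List.map_nil, List.sum_cons, List.sum_nil]
  ring

lemma hasDerivAt_ty (t : Tm) (x y : ℝ) (hu : 0 < (1+x)^2 - 4*y) :
    HasDerivAt (fun y' => tval t x y') (tval (DyT t) x y) y := by
  obtain ⟨c, k, q⟩ := t
  have hu2 : HasDerivAt (fun y' : ℝ => (1+x)^2 - 4*y') (-4) y := by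
    have := (hasDerivAt_const y ((1+x)^2)).fun_sub ((hasDerivAt_id y).const_mul (4:ℝ))
    simpa using this
  have h2 : HasDerivAt (fun y' : ℝ => ((1+x)^2 - 4*y')^q)
      ((-4) * q * ((1+x)^2 - 4*y)^(q-1)) y :=
    hu2.rpow_const (Or.inl (ne_of_gt hu))
  have h := h2.const_mul (c * (1+x)^k)
  refine h.congr_deriv ?_
  unfold tval DyT
  simp
  ring

lemma hasDerivAt_x (L : List Tm) (y x : ℝ) (hu : 0 < (1+x)^2 - 4*y) :
    HasDerivAt (fun x' => eval L x' y) (eval (DxL L) x y) x := by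
  induction L with
  | nil => simpa [eval, DxL] using hasDerivAt_const x (0:ℝ)
  | cons t L ih =>
      have h := (hasDerivAt_tx t y x hu).fun_add ih
      rw [DxL_cons, eval_append]
      exact h

lemma hasDerivAt_y (L : List Tm) (x y : ℝ) (hu : 0 < (1+x)^2 - 4*y) :
    HasDerivAt (fun y' => eval L x y') (eval (DyL L) x y) y := by
  induction L with
  | nil => simpa [eval, DyL] using hasDerivAt_const y (0:ℝ)
  | cons t L ih =>
      have h := (hasDerivAt_ty t x y hu).fun_add ih
      have hD : DyL (t :: L) = DyT t :: DyL L := by simp [DyL]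
      rw [hD, eval_cons]
      exact h

lemma iter_x (R y : ℝ) (L : List Tm) (j : ℕ) :
    ∀ a : ℝ, 0 < (1+a*R)^2 - 4*y →
    iteratedDeriv j (fun a' => eval L (a'*R) y) a = R^j * eval (DxL^[j] L) (a*R) y := by
  induction j with
  | zero => intro a _; simp
  | succ n ih =>
      intro a ha
      rw [iteratedDeriv_succ]
      have hopen : IsOpen {a' : ℝ | 0 < (1+a'*R)^2 - 4*y} := by
        apply isOpen_lt continuous_const
        fun_prop
      have hev : iteratedDeriv n (fun a' => eval L (a'*R) y)
          =ᶠ[nhds a] (fun a' => R^n * eval (DxL^[n] L) (a'*R) y) := by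
        filter_upwards [hopen.mem_nhds ha] with a' ha' using ih a' ha'
      rw [hev.deriv_eq]
      have h1 : HasDerivAt (fun a' => eval (DxL^[n] L) (a'*R) y)
          (eval (DxL (DxL^[n] L)) (a*R) y * R) a := by
        have hx := hasDerivAt_x (DxL^[n] L) y (a*R) ha
        have := hx.comp a (hasDerivAt_mul_const R)
        simpa [Function.comp_def] using this
      rw [(h1.const_mul (R^n)).deriv, Function.iterate_succ_apply']
      ring

lemma iter_y (B x : ℝ) (L : List Tm) (m : ℕ) :
    ∀ b : ℝ, 0 < (1+x)^2 - 4*(b*B) →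
    iteratedDeriv m (fun b' => eval L x (b'*B)) b = B^m * eval (DyL^[m] L) x (b*B) := by
  induction m with
  | zero => intro b _; simp
  | succ n ih =>
      intro b hb
      rw [iteratedDeriv_succ]
      have hopen : IsOpen {b' : ℝ | 0 < (1+x)^2 - 4*(b'*B)} := by
        apply isOpen_lt continuous_const
        fun_prop
      have hev : iteratedDeriv n (fun b' => eval L x (b'*B))
          =ᶠ[nhds b] (fun b' => B^n * eval (DyL^[n] L) x (b'*B)) := by
        filter_upwards [hopen.mem_nhds hb] with b' hb' using ih b' hb'
      rw [hev.deriv_eq]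
      have h1 : HasDerivAt (fun b' => eval (DyL^[n] L) x (b'*B))
          (eval (DyL (DyL^[n] L)) x (b*B) * B) b := by
        have hy := hasDerivAt_y (DyL^[n] L) x (b*B) hb
        have := hy.comp b (hasDerivAt_mul_const B)
        simpa [Function.comp_def] using this
      rw [(h1.const_mul (B^n)).deriv, Function.iterate_succ_apply']
      ring

lemma eventuallyEq_iteratedDeriv (n : ℕ) {f g : ℝ → ℝ} {x : ℝ} (h : f =ᶠ[nhds x] g) :
    iteratedDeriv n f =ᶠ[nhds x] iteratedDeriv n g := by
  induction n with
  | zero => simpa using h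
  | succ n ih => rw [iteratedDeriv_succ, iteratedDeriv_succ]; exact ih.deriv

lemma lam2_eq (σ σ₁ σ₂ r : ℝ) {a' b' : ℝ}
    (ha : 0 < 1 + a' * r ^ (2*(σ₂-σ₁))) :
    lam2 σ σ₁ σ₂ r a' b'
      = eval (scaleL (r^(2*σ₁)) Lu) (a' * r ^ (2*(σ₂-σ₁))) (b' * r ^ (2*(σ-2*σ₁))) := by
  unfold lam2 Gamma2 Gamma1
  set x := a' * r ^ (2*(σ₂-σ₁)) with hx
  set y := b' * r ^ (2*(σ-2*σ₁)) with hy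
  rw [eval_scale]
  have hne : (1 + x) ≠ 0 := ne_of_gt ha
  have h1 : (1:ℝ) - 4*b'*r ^ (2*(σ-2*σ₁)) * ((1+x)⁻¹)^2
      = ((1+x)^2 - 4*y) * ((1+x)⁻¹)^2 := by
    field_simp [hy]; ring
  rw [h1, Real.sqrt_mul' _ (by positivity), Real.sqrt_sq (by positivity)]
  unfold Lu eval tval
  simp only [List.map_cons, List.map_nil, List.sum_cons, List.sum_nil, Real.rpow_zero]
  rw [← Real.sqrt_eq_rpow]
  field_simp
  ring

lemma key (σ σ₁ σ₂ r : ℝ) (hr : 0 < r) (j m : ℕ) {a b : ℝ} (ha : 0 ≤ a)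
    (hU : 0 < (1 + a * r ^ (2*(σ₂-σ₁)))^2 - 4*(b * r ^ (2*(σ-2*σ₁)))) :
    pderiv2 j m (fun a' b' => lam2 σ σ₁ σ₂ r a' b') a b
      = r^(2*σ₁) * (r ^ (2*(σ₂-σ₁)))^j * (r ^ (2*(σ-2*σ₁)))^m
        * eval (DyL^[m] (DxL^[j] Lu)) (a * r ^ (2*(σ₂-σ₁))) (b * r ^ (2*(σ-2*σ₁))) := by
  set R := r ^ (2*(σ₂-σ₁)) with hRdef
  set B := r ^ (2*(σ-2*σ₁)) with hBdef
  set c := r ^ (2*σ₁) with hcdef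
  have hR : 0 < R := Real.rpow_pos_of_pos hr _
  have hstep1 : (fun b' => iteratedDeriv j (fun a' => lam2 σ σ₁ σ₂ r a' b') a)
      =ᶠ[nhds b] fun b' => R^j * eval (DxL^[j] (scaleL c Lu)) (a*R) (b'*B) := by
    have hopenb : IsOpen {b' : ℝ | 0 < (1+a*R)^2 - 4*(b'*B)} := by
      apply isOpen_lt continuous_const; fun_prop
    filter_upwards [hopenb.mem_nhds hU] with b' hb'
    have hopena : IsOpen {a' : ℝ | 0 < 1 + a'*R} := by
      apply isOpen_lt continuous_const; fun_prop
    have hmema : a ∈ {a' : ℝ | 0 < 1 + a'*R} := by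
      have : 0 ≤ a * R := mul_nonneg ha hR.le
      simp only [mem_setOf_eq]; linarith
    have hev : (fun a' => lam2 σ σ₁ σ₂ r a' b') =ᶠ[nhds a]
        (fun a' => eval (scaleL c Lu) (a'*R) (b'*B)) := by
      filter_upwards [hopena.mem_nhds hmema] with a' ha' using lam2_eq σ σ₁ σ₂ r ha'
    rw [(eventuallyEq_iteratedDeriv j hev).eq_of_nhds, iter_x R (b'*B) (scaleL c Lu) j a hb']
  unfold pderiv2
  rw [(eventuallyEq_iteratedDeriv m hstep1).eq_of_nhds]
  have hg : (fun b' => R^j * eval (DxL^[j] (scaleL c Lu)) (a*R) (b'*B))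
      = fun b' => eval (scaleL (R^j) (DxL^[j] (scaleL c Lu))) (a*R) (b'*B) := by
    funext b'; rw [eval_scale]
  rw [hg, iter_y B (a*R) _ m b hU, DxL_iter_scale, DyL_iter_scale, DyL_iter_scale,
    eval_scale, eval_scale]
  ring

lemma exists_delta (σ σ₁ σ₂ εs : ℝ) (hε : 0 < εs) (hp2 : 0 < 2*(σ₂-σ₁))
    (hp : 0 < 2*(σ-2*σ₁))
    (hpos : ∀ r ∈ Set.Ioc (0:ℝ) εs, ∀ a ∈ Set.Icc (0:ℝ) 1, ∀ b ∈ Set.Icc (0:ℝ) 1,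
      0 < 1 - 4*b*r ^ (2*(σ-2*σ₁)) * (Gamma1 σ₁ σ₂ r a)^2) :
    ∃ δ > 0, ∀ r ∈ Set.Ioc (0:ℝ) εs, ∀ a ∈ Set.Icc (0:ℝ) 1, ∀ b ∈ Set.Icc (0:ℝ) 1,
      δ ≤ (1 + a * r ^ (2*(σ₂-σ₁)))^2 - 4*(b * r ^ (2*(σ-2*σ₁))) := by
  set S : Set (ℝ × ℝ × ℝ) := Icc 0 εs ×ˢ Icc 0 1 ×ˢ Icc 0 1 with hS
  have hcomp : IsCompact S := (isCompact_Icc).prod ((isCompact_Icc).prod isCompact_Icc)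
  set F : ℝ × ℝ × ℝ → ℝ :=
    fun p => (1 + p.2.1 * p.1 ^ (2*(σ₂-σ₁)))^2 - 4*(p.2.2 * p.1 ^ (2*(σ-2*σ₁)))
    with hF
  have hcont : ContinuousOn F S := by
    have h1 : ContinuousOn (fun p : ℝ×ℝ×ℝ => p.1 ^ (2*(σ₂-σ₁))) S :=
      (continuous_fst.continuousOn).rpow_const (fun p _ => Or.inr hp2.le)
    have h2 : ContinuousOn (fun p : ℝ×ℝ×ℝ => p.1 ^ (2*(σ-2*σ₁))) S :=
      (continuous_fst.continuousOn).rpow_const (fun p _ => Or.inr hp.le)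
    exact (((continuousOn_const.add ((continuous_snd.fst.continuousOn).mul h1)).pow 2).sub
      (continuousOn_const.mul ((continuous_snd.snd.continuousOn).mul h2)))
  have hne : S.Nonempty := ⟨⟨0,0,0⟩, by
    refine ⟨⟨le_rfl, hε.le⟩, ⟨le_rfl, by norm_num⟩, ⟨le_rfl, by norm_num⟩⟩⟩
  obtain ⟨p₀, hp₀S, hmin'⟩ := hcomp.exists_isMinOn hne hcont
  have hmin : ∀ p ∈ S, F p₀ ≤ F p := fun p hp'' => hmin' hp''
  refine ⟨F p₀, ?_, ?_⟩
  · obtain ⟨hr₀, ha₀, hb₀⟩ := hp₀S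
    rcases eq_or_lt_of_le hr₀.1 with h0 | h0
    · have hF1 : F p₀ = 1 := by
        simp only [hF, ← h0, Real.zero_rpow (ne_of_gt hp2), Real.zero_rpow (ne_of_gt hp)]
        ring
      rw [hF1]; norm_num
    · have hr' : p₀.1 ∈ Ioc (0:ℝ) εs := ⟨h0, hr₀.2⟩
      have h := hpos p₀.1 hr' p₀.2.1 ha₀ p₀.2.2 hb₀
      have hRnn : 0 ≤ p₀.2.1 * p₀.1 ^ (2*(σ₂-σ₁)) :=
        mul_nonneg ha₀.1 (Real.rpow_nonneg h0.le _)
      have h1x : 0 < 1 + p₀.2.1 * p₀.1 ^ (2*(σ₂-σ₁)) := by linarith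
      unfold Gamma1 at h
      have hFe : F p₀ = (1 + p₀.2.1 * p₀.1 ^ (2*(σ₂-σ₁)))^2 *
          (1 - 4*p₀.2.2*p₀.1 ^ (2*(σ-2*σ₁)) * ((1 + p₀.2.1 * p₀.1 ^ (2*(σ₂-σ₁)))⁻¹)^2) := by
        simp only [hF]
        field_simp
      rw [hFe]
      exact mul_pos (pow_pos h1x 2) h
  · intro r hr a ha' b hb'
    exact hmin (r,a,b) ⟨⟨hr.1.le, hr.2⟩, ha', hb'⟩

noncomputable def tb (X δ M : ℝ) (t : Tm) : ℝ :=
  |t.1| * (1+X)^t.2.1 * max (δ ^ t.2.2) (M ^ t.2.2)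

noncomputable def Cb (X δ M : ℝ) (L : List Tm) : ℝ := (L.map (tb X δ M)).sum

lemma Cb_nonneg (X δ M : ℝ) (hX : 0 ≤ X) (hδ : 0 ≤ δ) (L : List Tm) :
    0 ≤ Cb X δ M L := by
  induction L with
  | nil => simp [Cb]
  | cons t L ih =>
      have h1 : 0 ≤ tb X δ M t := by
        unfold tb
        have : 0 ≤ δ ^ t.2.2 := Real.rpow_nonneg hδ _
        have hm : 0 ≤ max (δ ^ t.2.2) (M ^ t.2.2) := le_trans this (le_max_left _ _)
        have : (0:ℝ) ≤ (1+X)^t.2.1 := pow_nonneg (by linarith) _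
        positivity
      have hCb : Cb X δ M (t::L) = tb X δ M t + Cb X δ M L := by simp [Cb]
      rw [hCb]; linarith

lemma eval_le (X δ M : ℝ) (hδ : 0 < δ) (L : List Tm) {x y : ℝ}
    (hx0 : 0 ≤ x) (hxX : x ≤ X) (hδu : δ ≤ (1+x)^2 - 4*y) (huM : (1+x)^2 - 4*y ≤ M) :
    |eval L x y| ≤ Cb X δ M L := by
  induction L with
  | nil => simp [Cb]
  | cons t L ih =>
      rw [eval_cons]
      have hCb : Cb X δ M (t::L) = tb X δ M t + Cb X δ M L := by simp [Cb]
      rw [hCb]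
      refine (abs_add_le _ _).trans (add_le_add ?_ ih)
      obtain ⟨c,k,q⟩ := t
      unfold tval tb
      simp only
      set u := (1+x)^2-4*y with hu
      have hu0 : 0 < u := lt_of_lt_of_le hδ hδu
      have h1 : |c * (1+x)^k * u^q| = |c| * (1+x)^k * u^q := by
        rw [abs_mul, abs_mul, abs_of_nonneg (pow_nonneg (by linarith : (0:ℝ) ≤ 1+x) k),
          abs_of_nonneg (Real.rpow_nonneg hu0.le q)]
      rw [h1]
      refine mul_le_mul ?_ ?_ (Real.rpow_nonneg hu0.le q) ?_
      · exact mul_le_mul_of_nonneg_left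
          (pow_le_pow_left₀ (by linarith) (by linarith) k) (abs_nonneg c)
      · rcases le_or_gt 0 q with hq | hq
        · exact le_max_of_le_right (Real.rpow_le_rpow hu0.le huM hq)
        · exact le_max_of_le_left (Real.rpow_le_rpow_of_nonpos hδ hδu hq.le)
      · exact mul_nonneg (abs_nonneg c) (pow_nonneg (by linarith) k)

lemma rpow_collect (r : ℝ) (hr : 0 < r) (p q s : ℝ) (j m : ℕ) :
    r^p * (r^q)^j * (r^s)^m = r^(p + (j:ℝ)*q + (m:ℝ)*s) := by
  rw [← Real.rpow_natCast (r^q) j, ← Real.rpow_natCast (r^s) m,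
    ← Real.rpow_mul hr.le, ← Real.rpow_mul hr.le, ← Real.rpow_add hr, ← Real.rpow_add hr]
  congr 1
  ring

end Stmt3Aux

theorem stmt3 (σ σ₁ σ₂ εs : ℝ) (hσ : 1 ≤ σ) (hσ₁ : 0 ≤ σ₁) (h12 : σ₁ < σ / 2)
    (h22 : σ / 2 < σ₂) (h2σ : σ₂ ≤ σ) (hε : 0 < εs)
    (hpos : ∀ r ∈ Set.Ioc (0:ℝ) εs, ∀ a ∈ Set.Icc (0:ℝ) 1, ∀ b ∈ Set.Icc (0:ℝ) 1,
      0 < 1 - 4*b*r ^ (2*(σ-2*σ₁)) * (Gamma1 σ₁ σ₂ r a)^2)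
    (j m : ℕ) :
    (∃ C > 0, ∀ r ∈ Set.Ioc (0:ℝ) εs, ∀ a ∈ Set.Icc (0:ℝ) 1, ∀ b ∈ Set.Icc (0:ℝ) 1,
      |pderiv2 j m (fun a' b' => lam2 σ σ₁ σ₂ r a' b') a b|
        ≤ C * r ^ (2*σ₁ + 2*(j:ℝ)*(σ₂-σ₁) + 2*(m:ℝ)*(σ-2*σ₁))) ∧
    (∃ C2jm : ℝ, ∀ r ∈ Set.Ioc (0:ℝ) εs,
      pderiv2 j m (fun a' b' => lam2 σ σ₁ σ₂ r a' b') 0 0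
        = C2jm * r ^ (2*σ₁ + 2*(j:ℝ)*(σ₂-σ₁) + 2*(m:ℝ)*(σ-2*σ₁))) := by
  have hp2 : 0 < 2*(σ₂-σ₁) := by linarith
  have hp : 0 < 2*(σ-2*σ₁) := by linarith
  obtain ⟨δ, hδ, hδle⟩ := Stmt3Aux.exists_delta σ σ₁ σ₂ εs hε hp2 hp hpos
  set W := Stmt3Aux.DyL^[m] (Stmt3Aux.DxL^[j] Stmt3Aux.Lu) with hW
  set X := εs ^ (2*(σ₂-σ₁)) with hX
  have hX0 : 0 ≤ X := Real.rpow_nonneg hε.le _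
  set M := (1+X)^2 with hM
  have hCb0 : 0 ≤ Stmt3Aux.Cb X δ M W := Stmt3Aux.Cb_nonneg X δ M hX0 hδ.le W
  have hcoll : ∀ r : ℝ, 0 < r →
      r^(2*σ₁) * (r ^ (2*(σ₂-σ₁)))^j * (r ^ (2*(σ-2*σ₁)))^m
        = r ^ (2*σ₁ + 2*(j:ℝ)*(σ₂-σ₁) + 2*(m:ℝ)*(σ-2*σ₁)) := by
    intro r hr0
    rw [Stmt3Aux.rpow_collect r hr0]
    congr 1
    ring
  constructor
  · refine ⟨Stmt3Aux.Cb X δ M W + 1, by linarith, ?_⟩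
    intro r hr a haI b hbI
    have hr0 : 0 < r := hr.1
    have hR : 0 < r ^ (2*(σ₂-σ₁)) := Real.rpow_pos_of_pos hr0 _
    have hB : 0 < r ^ (2*(σ-2*σ₁)) := Real.rpow_pos_of_pos hr0 _
    have hδ' := hδle r hr a haI b hbI
    have hU : 0 < (1 + a * r ^ (2*(σ₂-σ₁)))^2 - 4*(b * r ^ (2*(σ-2*σ₁))) :=
      lt_of_lt_of_le hδ hδ'
    rw [Stmt3Aux.key σ σ₁ σ₂ r hr0 j m haI.1 hU]
    have hxX : a * r ^ (2*(σ₂-σ₁)) ≤ X := by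
      calc a * r ^ (2*(σ₂-σ₁)) ≤ 1 * r ^ (2*(σ₂-σ₁)) :=
            mul_le_mul_of_nonneg_right haI.2 hR.le
        _ = r ^ (2*(σ₂-σ₁)) := one_mul _
        _ ≤ X := Real.rpow_le_rpow hr0.le hr.2 hp2.le
    have hx0 : 0 ≤ a * r ^ (2*(σ₂-σ₁)) := mul_nonneg haI.1 hR.le
    have hy0 : 0 ≤ b * r ^ (2*(σ-2*σ₁)) := mul_nonneg hbI.1 hB.le
    have huM : (1 + a * r ^ (2*(σ₂-σ₁)))^2 - 4*(b * r ^ (2*(σ-2*σ₁))) ≤ M := by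
      have h2 : (1 + a * r ^ (2*(σ₂-σ₁)))^2 ≤ (1+X)^2 :=
        pow_le_pow_left₀ (by linarith) (by linarith) 2
      simp only [hM]
      linarith
    have hbound := Stmt3Aux.eval_le X δ M hδ W hx0 hxX hδ' huM
    have hposE : 0 < r^(2*σ₁) * (r ^ (2*(σ₂-σ₁)))^j * (r ^ (2*(σ-2*σ₁)))^m := by
      have := Real.rpow_pos_of_pos hr0 (2*σ₁)
      positivity
    calc |r^(2*σ₁) * (r ^ (2*(σ₂-σ₁)))^j * (r ^ (2*(σ-2*σ₁)))^m
          * Stmt3Aux.eval W (a * r ^ (2*(σ₂-σ₁))) (b * r ^ (2*(σ-2*σ₁)))|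
        = (r^(2*σ₁) * (r ^ (2*(σ₂-σ₁)))^j * (r ^ (2*(σ-2*σ₁)))^m)
          * |Stmt3Aux.eval W (a * r ^ (2*(σ₂-σ₁))) (b * r ^ (2*(σ-2*σ₁)))| := by
          rw [abs_mul, abs_of_pos hposE]
      _ ≤ (r^(2*σ₁) * (r ^ (2*(σ₂-σ₁)))^j * (r ^ (2*(σ-2*σ₁)))^m) * Stmt3Aux.Cb X δ M W :=
          mul_le_mul_of_nonneg_left hbound hposE.le
      _ ≤ (r^(2*σ₁) * (r ^ (2*(σ₂-σ₁)))^j * (r ^ (2*(σ-2*σ₁)))^m)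
          * (Stmt3Aux.Cb X δ M W + 1) :=
          mul_le_mul_of_nonneg_left (by linarith) hposE.le
      _ = (Stmt3Aux.Cb X δ M W + 1) * r ^ (2*σ₁ + 2*(j:ℝ)*(σ₂-σ₁) + 2*(m:ℝ)*(σ-2*σ₁)) := by
          rw [hcoll r hr0]; ring
  · refine ⟨Stmt3Aux.eval W 0 0, ?_⟩
    intro r hr
    have hr0 : 0 < r := hr.1
    have hU : 0 < (1 + 0 * r ^ (2*(σ₂-σ₁)))^2 - 4*(0 * r ^ (2*(σ-2*σ₁))) := by norm_num
    rw [Stmt3Aux.key σ σ₁ σ₂ r hr0 j m le_rfl hU]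
    simp only [zero_mul]
    rw [hcoll r hr0]
    ring
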